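/- Let i, j ∈ {0,1,2} and let s be a real number with −1/4 < s < 0. Then |γ_{i⊗j}'(s)/γ_{i⊗j}(s)| ≤ (d_{ij}/2)·(11/3 + log π + log(s/2 + 3)) + 5 + e_{i+j}/|s|. -/

import Mathlib

open Real

/-- The local parameters at infinity of the `k`-th symmetric power, for `k ∈ {0,1,2}`:
`P_0 = {0}`, `P_1 = {1/2, 3/2}`, `P_2 = {1, 1, 2}`. -/
noncomputable def localParams : ℕ → List ℝ
  | 0 => [0]
  | 1 => [1 / 2, 3 / 2]
  | 2 => [1, 1, 2]
  | _ => []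

/-- The Rankin–Selberg gamma factor
`γ_{i⊗j}(s) = ∏_{κ ∈ P_i} ∏_{ν ∈ P_j} π^(-s/2) Γ((s + κ + ν)/2)`. -/
noncomputable def rsGamma (i j : ℕ) (s : ℝ) : ℝ :=
  ((localParams i).map fun κ =>
    ((localParams j).map fun ν =>
      Real.pi ^ (-s / 2) * Real.Gamma ((s + κ + ν) / 2)).prod).prod

section Aux
open Set


noncomputable def dg (x : ℝ) : ℝ := deriv Real.Gamma x / Real.Gamma x

lemma gamma_ne_neg_nat {x : ℝ} (h0 : x ≠ 0) (h1 : -1 < x) : ∀ m : ℕ, x ≠ -(m : ℝ) := by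
  intro m
  cases m with
  | zero => simpa using h0
  | succ n =>
    intro h
    have hn : (0:ℝ) ≤ (n:ℝ) := Nat.cast_nonneg n
    rw [h] at h1
    push_cast at h1
    linarith

lemma hasDerivAt_logGamma {x : ℝ} (hx : 0 < x) :
    HasDerivAt (Real.log ∘ Real.Gamma) (dg x) x := by
  have hd := (Real.differentiableAt_Gamma (gamma_ne_neg_nat hx.ne' (by linarith))).hasDerivAt
  exact hd.log (Real.Gamma_pos_of_pos hx).ne'

lemma dg_mono {x y : ℝ} (hx : 0 < x) (hy : 0 < y) (hxy : x < y) : dg x ≤ dg y := by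
  have h1 := Real.convexOn_log_Gamma.le_slope_of_hasDerivAt (mem_Ioi.mpr hx) (mem_Ioi.mpr hy)
    hxy (hasDerivAt_logGamma hx)
  have h2 := Real.convexOn_log_Gamma.slope_le_of_hasDerivAt (mem_Ioi.mpr hx) (mem_Ioi.mpr hy)
    hxy (hasDerivAt_logGamma hy)
  linarith

lemma dg_two_le : dg 2 ≤ Real.log 2 := by
  have h := Real.convexOn_log_Gamma.le_slope_of_hasDerivAt (mem_Ioi.mpr (by norm_num : (0:ℝ) < 2))
    (mem_Ioi.mpr (by norm_num : (0:ℝ) < 3)) (by norm_num) (hasDerivAt_logGamma (by norm_num))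
  have h3 : Real.Gamma 3 = 2 := by
    have := Real.Gamma_nat_eq_factorial 2
    norm_num at this
    convert this using 2
    norm_num
  have h2 : Real.Gamma 2 = 1 := by
    have := Real.Gamma_nat_eq_factorial 1
    norm_num at this
    convert this using 2
    norm_num
  rw [slope_def_field] at h
  simp only [Function.comp_apply, h3, h2, Real.log_one] at h
  norm_num at h
  exact h

lemma neg_log_pi_le_dg_one : -Real.log π ≤ dg 1 := by
  have h := Real.convexOn_log_Gamma.slope_le_of_hasDerivAt
    (mem_Ioi.mpr (by norm_num : (0:ℝ) < 1/2))
    (mem_Ioi.mpr (by norm_num : (0:ℝ) < 1)) (by norm_num) (hasDerivAt_logGamma (by norm_num))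
  rw [slope_def_field] at h
  simp only [Function.comp_apply, Real.Gamma_one, Real.log_one, Real.Gamma_one_half_eq] at h
  rw [Real.log_sqrt Real.pi_pos.le] at h
  have : (0 - Real.log π / 2) / (1 - 1/2) = -Real.log π := by ring
  rw [this] at h
  exact h

lemma dg_abs_Ioo {x : ℝ} (h1 : 1 ≤ x) (h2 : x ≤ 2) : |dg x| ≤ Real.log π := by
  have hlog2 : Real.log 2 ≤ Real.log π :=
    Real.log_le_log (by norm_num) (by linarith [Real.pi_gt_three])
  rw [abs_le]
  constructor
  · rcases eq_or_lt_of_le h1 with h | h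
    · rw [← h]; exact neg_log_pi_le_dg_one
    · linarith [dg_mono (by norm_num : (0:ℝ) < 1) (by linarith) h, neg_log_pi_le_dg_one]
  · rcases eq_or_lt_of_le h2 with h | h
    · rw [h]; linarith [dg_two_le]
    · linarith [dg_mono (by linarith : (0:ℝ) < x) (by norm_num) h, dg_two_le]

lemma dg_rec {x : ℝ} (h0 : x ≠ 0) (h1 : -1 < x) : dg (x + 1) = dg x + 1 / x := by
  have hne := gamma_ne_neg_nat h0 h1
  have hne' : ∀ m : ℕ, x + 1 ≠ -(m : ℝ) := by
    intro m
    cases m with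
    | zero =>
      simp only [Nat.cast_zero, neg_zero]
      intro h; linarith
    | succ n =>
      have : (0:ℝ) ≤ (n:ℝ) := Nat.cast_nonneg n
      push_cast
      intro h; linarith
  have hd := (Real.differentiableAt_Gamma hne).hasDerivAt
  have hd' := (Real.differentiableAt_Gamma hne').hasDerivAt
  -- LHS: derivative of fun y => Gamma (y + 1)
  have hL : HasDerivAt (fun y => Real.Gamma (y + 1)) (deriv Real.Gamma (x + 1)) x := by
    have := hd'.comp x ((hasDerivAt_id x).add_const 1)
    rw [mul_one] at this; exact this
  -- RHS: derivative of fun y => y * Gamma y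
  have hR : HasDerivAt (fun y => y * Real.Gamma y)
      (1 * Real.Gamma x + x * deriv Real.Gamma x) x := (hasDerivAt_id x).mul hd
  have hev : (fun y => Real.Gamma (y + 1)) =ᶠ[nhds x] fun y => y * Real.Gamma y := by
    filter_upwards [eventually_ne_nhds h0] with y hy
    exact Real.Gamma_add_one hy
  have hL' : HasDerivAt (fun y => Real.Gamma (y + 1))
      (1 * Real.Gamma x + x * deriv Real.Gamma x) x := hR.congr_of_eventuallyEq hev
  have key : deriv Real.Gamma (x + 1) = Real.Gamma x + x * deriv Real.Gamma x := by
    have := hL.unique hL'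
    linarith [this]
  have hGne : Real.Gamma x ≠ 0 := Real.Gamma_ne_zero hne
  rw [dg, dg, key, Real.Gamma_add_one h0]
  field_simp
  ring

lemma dg_abs_pos {x : ℝ} (h0 : 0 < x) (h2 : x < 2) (h1 : x ≠ 1) :
    |dg x| ≤ Real.log π + 1 / x := by
  have hxinv : 0 < 1 / x := by positivity
  rcases lt_or_gt_of_ne h1 with h | h
  · -- x < 1 : use recurrence
    have hrec := dg_rec h0.ne' (by linarith)
    have hb : |dg (x + 1)| ≤ Real.log π := dg_abs_Ioo (by linarith) (by linarith)
    have : dg x = dg (x + 1) - 1 / x := by linarith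
    rw [this]
    calc |dg (x + 1) - 1 / x| ≤ |dg (x + 1)| + |1 / x| := abs_sub _ _
      _ ≤ Real.log π + 1 / x := by rw [abs_of_pos hxinv]; linarith
  · have := dg_abs_Ioo (le_of_lt h) h2.le
    linarith

lemma dg_abs_neg {x : ℝ} (hx1 : -1 < x) (hx0 : x < 0) :
    |dg x| ≤ Real.log π + 1 / (x + 1) + 1 / (-x) := by
  have h1 : dg (x + 1) = dg x + 1 / x := dg_rec hx0.ne hx1
  have hx1pos : 0 < x + 1 := by linarith
  have h2 : dg (x + 2) = dg (x + 1) + 1 / (x + 1) := by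
    have := dg_rec hx1pos.ne' (by linarith : (-1:ℝ) < x + 1)
    convert this using 2 <;> ring
  have hb : |dg (x + 2)| ≤ Real.log π := dg_abs_Ioo (by linarith) (by linarith)
  have hdx : dg x = dg (x + 2) - 1 / (x + 1) - 1 / x := by linarith
  rw [hdx]
  have e1 : 0 < 1 / (x + 1) := by positivity
  have e2 : (0:ℝ) < 1 / (-x) := by
    apply div_pos one_pos; linarith
  calc |dg (x + 2) - 1 / (x + 1) - 1 / x| ≤ |dg (x + 2)| + |1 / (x+1)| + |1/x| := by
        calc _ ≤ |dg (x + 2) - 1/(x+1)| + |1/x| := abs_sub _ _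
          _ ≤ _ := by gcongr; exact abs_sub _ _
    _ ≤ Real.log π + 1 / (x + 1) + 1 / (-x) := by
        rw [abs_of_pos e1, abs_div, abs_one, abs_of_neg hx0, one_div]
        have : |dg (x+2)| ≤ Real.log π := hb
        linarith

noncomputable def Fac (c : ℝ) (s : ℝ) : ℝ := Real.pi ^ (-s / 2) * Real.Gamma ((s + c) / 2)

lemma pi_rpow_hasDerivAt (s : ℝ) :
    HasDerivAt (fun t : ℝ => Real.pi ^ (-t / 2))
      (Real.pi ^ (-s / 2) * (-(Real.log π) / 2)) s := by
  have heq : (fun t : ℝ => Real.pi ^ (-t / 2)) = fun t => Real.exp (Real.log π * (-t / 2)) := by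
    funext t
    rw [Real.rpow_def_of_pos Real.pi_pos]
  have hg : HasDerivAt (fun t : ℝ => Real.log π * (-t / 2)) (-(Real.log π) / 2) s := by
    have := ((hasDerivAt_id s).neg.div_const 2).const_mul (Real.log π)
    exact this.congr_deriv (by ring)
  have := hg.exp
  rw [← heq] at this
  convert this using 1
  rw [Real.rpow_def_of_pos Real.pi_pos]

lemma Gamma_comp_hasDerivAt (c s : ℝ) (h0 : (s + c) / 2 ≠ 0) (h1 : -1 < (s + c) / 2) :
    HasDerivAt (fun t : ℝ => Real.Gamma ((t + c) / 2))
      (deriv Real.Gamma ((s + c) / 2) * (1 / 2)) s := by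
  have hd := (Real.differentiableAt_Gamma (gamma_ne_neg_nat h0 h1)).hasDerivAt
  have hin : HasDerivAt (fun t : ℝ => (t + c) / 2) (1 / 2) s := by
    have := ((hasDerivAt_id s).add_const c).div_const 2
    simpa using this
  exact hd.comp s hin

lemma Fac_hasDerivAt (c s : ℝ) (h0 : (s + c) / 2 ≠ 0) (h1 : -1 < (s + c) / 2) :
    HasDerivAt (Fac c)
      (Real.pi ^ (-s / 2) * (-(Real.log π) / 2) * Real.Gamma ((s + c) / 2)
        + Real.pi ^ (-s / 2) * (deriv Real.Gamma ((s + c) / 2) * (1 / 2))) s :=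
  (pi_rpow_hasDerivAt s).mul (Gamma_comp_hasDerivAt c s h0 h1)

lemma Fac_ne (c s : ℝ) (h0 : (s + c) / 2 ≠ 0) (h1 : -1 < (s + c) / 2) : Fac c s ≠ 0 :=
  mul_ne_zero (ne_of_gt (Real.rpow_pos_of_pos Real.pi_pos _))
    (Real.Gamma_ne_zero (gamma_ne_neg_nat h0 h1))

lemma logDeriv_Fac (c s : ℝ) (h0 : (s + c) / 2 ≠ 0) (h1 : -1 < (s + c) / 2) :
    logDeriv (Fac c) s = -(Real.log π) / 2 + dg ((s + c) / 2) / 2 := by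
  rw [logDeriv_apply, (Fac_hasDerivAt c s h0 h1).deriv]
  have hπ : Real.pi ^ (-s / 2) ≠ 0 := ne_of_gt (Real.rpow_pos_of_pos Real.pi_pos _)
  have hΓ : Real.Gamma ((s + c) / 2) ≠ 0 := Real.Gamma_ne_zero (gamma_ne_neg_nat h0 h1)
  rw [Fac, dg]
  field_simp

lemma abs_logDeriv_Fac (c s : ℝ) (hpos : 0 < s + c) (hlt : s + c < 4) (hne : s + c ≠ 2) :
    |logDeriv (Fac c) s| ≤ Real.log π + 1 / (s + c) := by
  have h0 : (s + c) / 2 ≠ 0 := by positivity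
  have h1 : -1 < (s + c) / 2 := by linarith
  rw [logDeriv_Fac c s h0 h1]
  have hdg : |dg ((s + c) / 2)| ≤ Real.log π + 1 / ((s + c) / 2) :=
    dg_abs_pos (by linarith) (by linarith) (fun h => hne (by linarith [h]))
  have hrw : 1 / ((s + c) / 2) = 2 / (s + c) := by
    field_simp
  rw [hrw] at hdg
  have hlogpi : 0 < Real.log π := Real.log_pos (by linarith [Real.pi_gt_three])
  calc |(-(Real.log π) / 2 + dg ((s + c) / 2) / 2)|
      ≤ |(-(Real.log π) / 2)| + |dg ((s + c) / 2) / 2| := abs_add_le _ _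
    _ ≤ Real.log π / 2 + (Real.log π + 2 / (s + c)) / 2 := by
        rw [abs_div, abs_div, abs_neg, abs_of_pos hlogpi]
        simp only [abs_two]
        gcongr
    _ = Real.log π + 1 / (s + c) := by ring

lemma abs_logDeriv_Fac0 {s : ℝ} (hs₁ : -(1 / 4) < s) (hs₂ : s < 0) :
    |logDeriv (Fac 0) s| ≤ Real.log π + 1 / (s + 2) + 1 / (-s) := by
  have h0 : (s + 0) / 2 ≠ 0 := by intro h; nlinarith [h]
  have h1 : -1 < (s + 0) / 2 := by linarith
  rw [logDeriv_Fac 0 s h0 h1]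
  have hdg : |dg ((s + 0) / 2)| ≤ Real.log π + 1 / (s / 2 + 1) + 1 / (-(s / 2)) := by
    have := dg_abs_neg (x := s / 2) (by linarith) (by linarith)
    convert this using 3 <;> ring
  have hlogpi : 0 < Real.log π := Real.log_pos (by linarith [Real.pi_gt_three])
  have e1 : 1 / (s / 2 + 1) = 2 / (s + 2) := by
    rw [div_eq_div_iff] <;> try ring
    · linarith
    · linarith
  have e2 : 1 / (-(s / 2)) = 2 / (-s) := by
    rw [div_eq_div_iff] <;> try ring
    · linarith
    · linarith
  rw [e1, e2] at hdg
  calc |(-(Real.log π) / 2 + dg ((s + 0) / 2) / 2)|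
      ≤ |(-(Real.log π) / 2)| + |dg ((s + 0) / 2) / 2| := abs_add_le _ _
    _ ≤ Real.log π / 2 + (Real.log π + 2 / (s + 2) + 2 / (-s)) / 2 := by
        rw [abs_div, abs_div, abs_neg, abs_of_pos hlogpi]
        simp only [abs_two]
        gcongr
    _ = Real.log π + 1 / (s + 2) + 1 / (-s) := by ring

lemma listProd_ne (cs : List ℝ) (s : ℝ)
    (h : ∀ c ∈ cs, (s + c) / 2 ≠ 0 ∧ -1 < (s + c) / 2) :
    (cs.map (fun c => Fac c s)).prod ≠ 0 := by
  induction cs with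
  | nil => simp
  | cons c cs ih =>
    simp only [List.map_cons, List.prod_cons]
    exact mul_ne_zero (Fac_ne c s (h c (by simp)).1 (h c (by simp)).2)
      (ih (fun c hc => h c (by simp [hc])))

lemma listProd_diff (cs : List ℝ) (s : ℝ)
    (h : ∀ c ∈ cs, (s + c) / 2 ≠ 0 ∧ -1 < (s + c) / 2) :
    DifferentiableAt ℝ (fun t => (cs.map (fun c => Fac c t)).prod) s := by
  induction cs with
  | nil => simpa using differentiableAt_const (1:ℝ)
  | cons c cs ih =>
    simp only [List.map_cons, List.prod_cons]
    exact ((Fac_hasDerivAt c s (h c (by simp)).1 (h c (by simp)).2).differentiableAt).mul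
      (ih (fun c hc => h c (by simp [hc])))

lemma logDeriv_listProd (cs : List ℝ) (s : ℝ)
    (h : ∀ c ∈ cs, (s + c) / 2 ≠ 0 ∧ -1 < (s + c) / 2) :
    logDeriv (fun t => (cs.map (fun c => Fac c t)).prod) s
      = (cs.map (fun c => logDeriv (Fac c) s)).sum := by
  induction cs with
  | nil => simp [logDeriv_const]
  | cons c cs ih =>
    simp only [List.map_cons, List.prod_cons, List.sum_cons]
    rw [← ih (fun c hc => h c (by simp [hc]))]
    exact logDeriv_mul s (Fac_ne c s (h c (by simp)).1 (h c (by simp)).2)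
      (listProd_ne cs s (fun c hc => h c (by simp [hc])))
      ((Fac_hasDerivAt c s (h c (by simp)).1 (h c (by simp)).2).differentiableAt)
      (listProd_diff cs s (fun c hc => h c (by simp [hc])))

lemma abs_list_sum_le (cs : List ℝ) (f g : ℝ → ℝ) (h : ∀ c ∈ cs, |f c| ≤ g c) :
    |(cs.map f).sum| ≤ (cs.map g).sum := by
  induction cs with
  | nil => simp
  | cons c cs ih =>
    simp only [List.map_cons, List.sum_cons]
    calc |f c + (cs.map f).sum| ≤ |f c| + |(cs.map f).sum| := abs_add_le _ _
      _ ≤ g c + (cs.map g).sum := by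
          gcongr
          · exact h c (by simp)
          · exact ih (fun c hc => h c (by simp [hc]))

lemma cond_aux {s c : ℝ} (hs₁ : -(1 / 4) < s) (hc : 1 / 2 ≤ c) :
    (s + c) / 2 ≠ 0 ∧ -1 < (s + c) / 2 :=
  ⟨ne_of_gt (by linarith), by linarith⟩

lemma log_pi_le_two : Real.log Real.pi ≤ 2 := by
  rw [Real.log_le_iff_le_exp Real.pi_pos]
  have h1 := Real.exp_one_gt_d9
  have h2 : Real.exp 2 = Real.exp 1 * Real.exp 1 := by
    rw [← Real.exp_add]; norm_num
  rw [h2]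
  nlinarith [Real.pi_lt_d2, Real.exp_pos 1]

lemma one_le_log_aux {s : ℝ} (hs₁ : -(1 / 4) < s) : 1 ≤ Real.log (s / 2 + 3) := by
  rw [Real.le_log_iff_exp_le (by linarith)]
  have h1 := Real.exp_one_lt_d9
  linarith

end Aux

set_option maxHeartbeats 2000000 in
theorem rsGamma_logDeriv_bound_neg (i j : ℕ) (hi : i ≤ 2) (hj : j ≤ 2)
    (s : ℝ) (hs₁ : -(1 / 4) < s) (hs₂ : s < 0) :
    |deriv (rsGamma i j) s / rsGamma i j s| ≤
      (((i : ℝ) + 1) * ((j : ℝ) + 1)) / 2 * (11 / 3 + Real.log Real.pi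
        + Real.log (s / 2 + 3)) + 5
        + (if i = 0 ∧ j = 0 then (1 : ℝ) else 0) / |s| := by
  have hπ2 := log_pi_le_two
  have hlg := one_le_log_aux hs₁
  interval_cases i <;> interval_cases j
  · -- i = 0, j = 0
    have hrw : rsGamma 0 0 = Fac 0 := by
      funext t
      simp only [rsGamma, localParams, Fac, List.map_cons, List.map_nil, List.prod_cons,
        List.prod_nil]
      ring_nf
    rw [hrw, ← logDeriv_apply]
    have key := abs_logDeriv_Fac0 hs₁ hs₂
    have iv1 : 1 / (s + 2) ≤ 4 / 7 := by
      rw [div_le_iff₀ (by linarith)]; linarith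
    rw [if_pos ⟨rfl, rfl⟩, abs_of_neg hs₂]
    push_cast
    have hrw2 : (1:ℝ) / -s = 1 / (-s) := rfl
    linarith [key, iv1]
  · -- i = 0, j = 1
    have hrw : rsGamma 0 1 = fun t => (([1/2, 3/2] : List ℝ).map (fun c => Fac c t)).prod := by
      funext t
      simp only [rsGamma, localParams, Fac, List.map_cons, List.map_nil, List.prod_cons,
        List.prod_nil]
      ring_nf
    rw [hrw, ← logDeriv_apply, logDeriv_listProd _ s
      (fun c hc => cond_aux hs₁ (by fin_cases hc <;> norm_num))]
    have key := abs_list_sum_le [1/2, 3/2] (fun c => logDeriv (Fac c) s)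
      (fun c => Real.log Real.pi + 1 / (s + c)) (fun c hc => by
        fin_cases hc <;>
          exact abs_logDeriv_Fac _ s (by norm_num; linarith) (by norm_num; linarith)
            (by intro h; norm_num at h; linarith))
    simp only [List.map_cons, List.map_nil, List.sum_cons, List.sum_nil, add_zero] at key ⊢
    have iv1 : 1 / (s + 1/2) ≤ 4 := by
      rw [div_le_iff₀ (by norm_num; linarith)]; norm_num; linarith
    have iv2 : 1 / (s + 3/2) ≤ 4/5 := by
      rw [div_le_iff₀ (by norm_num; linarith)]; norm_num; linarith
    rw [if_neg (by norm_num), zero_div, add_zero]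
    push_cast
    linarith [key, iv1, iv2]
  · -- i = 0, j = 2
    have hrw : rsGamma 0 2 = fun t => (([1, 1, 2] : List ℝ).map (fun c => Fac c t)).prod := by
      funext t
      simp only [rsGamma, localParams, Fac, List.map_cons, List.map_nil, List.prod_cons,
        List.prod_nil]
      ring_nf
    rw [hrw, ← logDeriv_apply, logDeriv_listProd _ s
      (fun c hc => cond_aux hs₁ (by fin_cases hc <;> norm_num))]
    have key := abs_list_sum_le [1, 1, 2] (fun c => logDeriv (Fac c) s)
      (fun c => Real.log Real.pi + 1 / (s + c)) (fun c hc => by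
        fin_cases hc <;>
          exact abs_logDeriv_Fac _ s (by norm_num; linarith) (by norm_num; linarith)
            (by intro h; norm_num at h; linarith))
    simp only [List.map_cons, List.map_nil, List.sum_cons, List.sum_nil, add_zero] at key ⊢
    have iv1 : 1 / (s + 1) ≤ 4/3 := by
      rw [div_le_iff₀ (by norm_num; linarith)]; norm_num; linarith
    have iv2 : 1 / (s + 2) ≤ 4/7 := by
      rw [div_le_iff₀ (by norm_num; linarith)]; norm_num; linarith
    rw [if_neg (by norm_num), zero_div, add_zero]
    push_cast
    linarith [key, iv1, iv2]
  · -- i = 1, j = 0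
    have hrw : rsGamma 1 0 = fun t => (([1/2, 3/2] : List ℝ).map (fun c => Fac c t)).prod := by
      funext t
      simp only [rsGamma, localParams, Fac, List.map_cons, List.map_nil, List.prod_cons,
        List.prod_nil]
      ring_nf
    rw [hrw, ← logDeriv_apply, logDeriv_listProd _ s
      (fun c hc => cond_aux hs₁ (by fin_cases hc <;> norm_num))]
    have key := abs_list_sum_le [1/2, 3/2] (fun c => logDeriv (Fac c) s)
      (fun c => Real.log Real.pi + 1 / (s + c)) (fun c hc => by
        fin_cases hc <;>
          exact abs_logDeriv_Fac _ s (by norm_num; linarith) (by norm_num; linarith)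
            (by intro h; norm_num at h; linarith))
    simp only [List.map_cons, List.map_nil, List.sum_cons, List.sum_nil, add_zero] at key ⊢
    have iv1 : 1 / (s + 1/2) ≤ 4 := by
      rw [div_le_iff₀ (by norm_num; linarith)]; norm_num; linarith
    have iv2 : 1 / (s + 3/2) ≤ 4/5 := by
      rw [div_le_iff₀ (by norm_num; linarith)]; norm_num; linarith
    rw [if_neg (by norm_num), zero_div, add_zero]
    push_cast
    linarith [key, iv1, iv2]
  · -- i = 1, j = 1
    have hrw : rsGamma 1 1 = fun t => (([1, 2, 2, 3] : List ℝ).map (fun c => Fac c t)).prod := by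
      funext t
      simp only [rsGamma, localParams, Fac, List.map_cons, List.map_nil, List.prod_cons,
        List.prod_nil]
      ring_nf
    rw [hrw, ← logDeriv_apply, logDeriv_listProd _ s
      (fun c hc => cond_aux hs₁ (by fin_cases hc <;> norm_num))]
    have key := abs_list_sum_le [1, 2, 2, 3] (fun c => logDeriv (Fac c) s)
      (fun c => Real.log Real.pi + 1 / (s + c)) (fun c hc => by
        fin_cases hc <;>
          exact abs_logDeriv_Fac _ s (by norm_num; linarith) (by norm_num; linarith)
            (by intro h; norm_num at h; linarith))
    simp only [List.map_cons, List.map_nil, List.sum_cons, List.sum_nil, add_zero] at key ⊢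
    have iv1 : 1 / (s + 1) ≤ 4/3 := by
      rw [div_le_iff₀ (by norm_num; linarith)]; norm_num; linarith
    have iv2 : 1 / (s + 2) ≤ 4/7 := by
      rw [div_le_iff₀ (by norm_num; linarith)]; norm_num; linarith
    have iv3 : 1 / (s + 3) ≤ 4/11 := by
      rw [div_le_iff₀ (by norm_num; linarith)]; norm_num; linarith
    rw [if_neg (by norm_num), zero_div, add_zero]
    push_cast
    linarith [key, iv1, iv2, iv3]
  · -- i = 1, j = 2
    have hrw : rsGamma 1 2 = fun t => (([3/2, 3/2, 5/2, 5/2, 5/2, 7/2] : List ℝ).map (fun c => Fac c t)).prod := by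
      funext t
      simp only [rsGamma, localParams, Fac, List.map_cons, List.map_nil, List.prod_cons,
        List.prod_nil]
      ring_nf
    rw [hrw, ← logDeriv_apply, logDeriv_listProd _ s
      (fun c hc => cond_aux hs₁ (by fin_cases hc <;> norm_num))]
    have key := abs_list_sum_le [3/2, 3/2, 5/2, 5/2, 5/2, 7/2] (fun c => logDeriv (Fac c) s)
      (fun c => Real.log Real.pi + 1 / (s + c)) (fun c hc => by
        fin_cases hc <;>
          exact abs_logDeriv_Fac _ s (by norm_num; linarith) (by norm_num; linarith)
            (by intro h; norm_num at h; linarith))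
    simp only [List.map_cons, List.map_nil, List.sum_cons, List.sum_nil, add_zero] at key ⊢
    have iv1 : 1 / (s + 3/2) ≤ 4/5 := by
      rw [div_le_iff₀ (by norm_num; linarith)]; norm_num; linarith
    have iv2 : 1 / (s + 5/2) ≤ 4/9 := by
      rw [div_le_iff₀ (by norm_num; linarith)]; norm_num; linarith
    have iv3 : 1 / (s + 7/2) ≤ 4/13 := by
      rw [div_le_iff₀ (by norm_num; linarith)]; norm_num; linarith
    rw [if_neg (by norm_num), zero_div, add_zero]
    push_cast
    linarith [key, iv1, iv2, iv3]
  · -- i = 2, j = 0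
    have hrw : rsGamma 2 0 = fun t => (([1, 1, 2] : List ℝ).map (fun c => Fac c t)).prod := by
      funext t
      simp only [rsGamma, localParams, Fac, List.map_cons, List.map_nil, List.prod_cons,
        List.prod_nil]
      ring_nf
    rw [hrw, ← logDeriv_apply, logDeriv_listProd _ s
      (fun c hc => cond_aux hs₁ (by fin_cases hc <;> norm_num))]
    have key := abs_list_sum_le [1, 1, 2] (fun c => logDeriv (Fac c) s)
      (fun c => Real.log Real.pi + 1 / (s + c)) (fun c hc => by
        fin_cases hc <;>
          exact abs_logDeriv_Fac _ s (by norm_num; linarith) (by norm_num; linarith)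
            (by intro h; norm_num at h; linarith))
    simp only [List.map_cons, List.map_nil, List.sum_cons, List.sum_nil, add_zero] at key ⊢
    have iv1 : 1 / (s + 1) ≤ 4/3 := by
      rw [div_le_iff₀ (by norm_num; linarith)]; norm_num; linarith
    have iv2 : 1 / (s + 2) ≤ 4/7 := by
      rw [div_le_iff₀ (by norm_num; linarith)]; norm_num; linarith
    rw [if_neg (by norm_num), zero_div, add_zero]
    push_cast
    linarith [key, iv1, iv2]
  · -- i = 2, j = 1
    have hrw : rsGamma 2 1 = fun t => (([3/2, 3/2, 5/2, 5/2, 5/2, 7/2] : List ℝ).map (fun c => Fac c t)).prod := by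
      funext t
      simp only [rsGamma, localParams, Fac, List.map_cons, List.map_nil, List.prod_cons,
        List.prod_nil]
      ring_nf
    rw [hrw, ← logDeriv_apply, logDeriv_listProd _ s
      (fun c hc => cond_aux hs₁ (by fin_cases hc <;> norm_num))]
    have key := abs_list_sum_le [3/2, 3/2, 5/2, 5/2, 5/2, 7/2] (fun c => logDeriv (Fac c) s)
      (fun c => Real.log Real.pi + 1 / (s + c)) (fun c hc => by
        fin_cases hc <;>
          exact abs_logDeriv_Fac _ s (by norm_num; linarith) (by norm_num; linarith)
            (by intro h; norm_num at h; linarith))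
    simp only [List.map_cons, List.map_nil, List.sum_cons, List.sum_nil, add_zero] at key ⊢
    have iv1 : 1 / (s + 3/2) ≤ 4/5 := by
      rw [div_le_iff₀ (by norm_num; linarith)]; norm_num; linarith
    have iv2 : 1 / (s + 5/2) ≤ 4/9 := by
      rw [div_le_iff₀ (by norm_num; linarith)]; norm_num; linarith
    have iv3 : 1 / (s + 7/2) ≤ 4/13 := by
      rw [div_le_iff₀ (by norm_num; linarith)]; norm_num; linarith
    rw [if_neg (by norm_num), zero_div, add_zero]
    push_cast
    linarith [key, iv1, iv2, iv3]
  · -- i = 2, j = 2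
    have hrw : rsGamma 2 2 = fun t => (([2, 2, 2, 2, 3, 3, 3, 3, 4] : List ℝ).map (fun c => Fac c t)).prod := by
      funext t
      simp only [rsGamma, localParams, Fac, List.map_cons, List.map_nil, List.prod_cons,
        List.prod_nil]
      ring_nf
    rw [hrw, ← logDeriv_apply, logDeriv_listProd _ s
      (fun c hc => cond_aux hs₁ (by fin_cases hc <;> norm_num))]
    have key := abs_list_sum_le [2, 2, 2, 2, 3, 3, 3, 3, 4] (fun c => logDeriv (Fac c) s)
      (fun c => Real.log Real.pi + 1 / (s + c)) (fun c hc => by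
        fin_cases hc <;>
          exact abs_logDeriv_Fac _ s (by norm_num; linarith) (by norm_num; linarith)
            (by intro h; norm_num at h; linarith))
    simp only [List.map_cons, List.map_nil, List.sum_cons, List.sum_nil, add_zero] at key ⊢
    have iv1 : 1 / (s + 2) ≤ 4/7 := by
      rw [div_le_iff₀ (by norm_num; linarith)]; norm_num; linarith
    have iv2 : 1 / (s + 3) ≤ 4/11 := by
      rw [div_le_iff₀ (by norm_num; linarith)]; norm_num; linarith
    have iv3 : 1 / (s + 4) ≤ 4/15 := by
      rw [div_le_iff₀ (by norm_num; linarith)]; norm_num; linarith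
    rw [if_neg (by norm_num), zero_div, add_zero]
    push_cast
    linarith [key, iv1, iv2, iv3]
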